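/- Let μ be a spherically symmetric (rotation-invariant) absolutely continuous finite measure on ℝⁿ, let B be a closed ball centered at the origin, and let T ⊆ ℝⁿ be a star-shaped set with respect to the origin. Then μ(B ∩ T) · μ(ℝⁿ) ≥ μ(B) · μ(T). -/

import Mathlib

open MeasureTheory

set_option maxHeartbeats 1000000
set_option synthInstance.maxHeartbeats 400000

section Aux

variable (n : ℕ)

local notation "E'" => EuclideanSpace ℝ (Fin n)
local notation "A'" => (EuclideanSpace ℝ (Fin n)) →L[ℝ] (EuclideanSpace ℝ (Fin n))
local notation "G'" => unitary ((EuclideanSpace ℝ (Fin n)) →L[ℝ] (EuclideanSpace ℝ (Fin n)))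

noncomputable instance : ContinuousStar A' := by
  refine ⟨?_⟩
  have h : (star : A' → A') = fun f => ContinuousLinearMap.adjoint f :=
    funext fun f => ContinuousLinearMap.star_eq_adjoint f
  rw [h]
  exact LinearIsometryEquiv.continuous _

instance : ContinuousInv G' := ⟨by
  apply continuous_induced_rng.2
  have h : ((fun u => ((u⁻¹ : G') : A')) : G' → A') = fun u : G' => star (u : A') := rfl
  exact continuous_star.comp continuous_subtype_val⟩

instance : IsTopologicalGroup G' :=
  { continuous_mul := continuous_mul, continuous_inv := continuous_inv }

instance : CompactSpace G' := by
  have hc : IsCompact (unitary A' : Set A') := by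
    apply Metric.isCompact_of_isClosed_isBounded
    · have h : (unitary A' : Set A') = {x | star x * x = 1} ∩ {x | x * star x = 1} := by
        ext x; exact Unitary.mem_iff
      rw [h]
      exact (isClosed_eq (continuous_star.mul continuous_id) continuous_const).inter
        (isClosed_eq (continuous_id.mul continuous_star) continuous_const)
    · rw [Metric.isBounded_iff_subset_closedBall 0]
      refine ⟨1, fun x hx => ?_⟩
      simp only [Metric.mem_closedBall, dist_zero_right]
      refine ContinuousLinearMap.opNorm_le_bound _ zero_le_one fun y => ?_
      rw [ContinuousLinearMap.norm_map_of_mem_unitary hx, one_mul]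
  exact isCompact_iff_compactSpace.mp hc

noncomputable instance : MeasurableSpace G' := borel _
instance : BorelSpace G' := ⟨rfl⟩

variable {n}

/-- The action of a unitary `O` as the isometry `x ↦ O⁻¹ x`. -/
noncomputable def uact (O : G') : E' ≃ₗᵢ[ℝ] E' := Unitary.linearIsometryEquiv O⁻¹

lemma uact_apply (O : G') (x : E') : uact O x = (star (O : A')) x := rfl

lemma uact_norm (O : G') (x : E') : ‖uact O x‖ = ‖x‖ := (uact O).norm_map x

lemma uact_mul (U O : G') (x : E') : uact (U * O) x = uact O (uact U x) := by
  have h : uact (U * O) = Unitary.linearIsometryEquiv (O⁻¹ * U⁻¹) := by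
    rw [uact, mul_inv_rev]
  rw [h, map_mul]
  rfl

lemma uact_cont : Continuous fun p : E' × G' => uact p.2 p.1 := by
  have h1 : Continuous fun p : E' × G' => ((star (p.2 : A'), p.1) : A' × E') :=
    ((continuous_star.comp (continuous_subtype_val.comp continuous_snd))).prodMk
      continuous_fst
  exact isBoundedBilinearMap_apply.continuous.comp h1

lemma uact_exists (x z : E') (h : ‖x‖ = ‖z‖) : ∃ U : G', uact U x = z := by
  set φ : G' ≃* (E' ≃ₗᵢ[ℝ] E') := Unitary.linearIsometryEquiv with hφ
  set ψ : E' ≃ₗᵢ[ℝ] E' := Submodule.reflection (ℝ ∙ (x - z))ᗮ with hψ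
  refine ⟨(φ.symm ψ)⁻¹, ?_⟩
  have h1 : uact ((φ.symm ψ)⁻¹) = ψ := by
    rw [uact, inv_inv, hφ, MulEquiv.apply_symm_apply]
  rw [h1, hψ]
  exact Submodule.reflection_sub h

attribute [irreducible] uact

lemma uact_cont1 (x : E') : Continuous fun O : G' => uact O x :=
  uact_cont.comp (Continuous.prodMk_right x)

lemma uact_meas2 : Measurable fun p : E' × G' => uact p.2 p.1 :=
  uact_cont.measurable

lemma uact_meas1 (x : E') : Measurable fun O : G' => uact O x :=
  (uact_cont1 x).measurable

lemma uact_measO (O : G') : Measurable (uact O : E' → E') :=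
  (uact O).continuous.measurable

end Aux

theorem starshaped_ball_correlation (n : ℕ)
    (μ : Measure (EuclideanSpace ℝ (Fin n))) [IsFiniteMeasure μ]
    (hac : μ ≪ volume)
    (hinv : ∀ O : EuclideanSpace ℝ (Fin n) ≃ₗᵢ[ℝ] EuclideanSpace ℝ (Fin n),
      Measure.map O μ = μ)
    (R : ℝ) (hR : 0 ≤ R)
    (T : Set (EuclideanSpace ℝ (Fin n))) (hTmeas : MeasurableSet T)
    (hstar : ∀ x ∈ T, ∀ t : ℝ, 0 ≤ t → t ≤ 1 → t • x ∈ T) :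
    μ (Metric.closedBall 0 R) * μ T ≤ μ (Metric.closedBall 0 R ∩ T) * μ Set.univ := by
  classical
  set P : Measure (unitary ((EuclideanSpace ℝ (Fin n)) →L[ℝ] (EuclideanSpace ℝ (Fin n)))) :=
    Measure.haarMeasure ⊤ with hP
  have hPuniv : P Set.univ = 1 := by
    have h := Measure.haarMeasure_self
      (K₀ := (⊤ : TopologicalSpace.PositiveCompacts
        (unitary ((EuclideanSpace ℝ (Fin n)) →L[ℝ] (EuclideanSpace ℝ (Fin n))))))
    simpa using h
  haveI : IsProbabilityMeasure P := ⟨hPuniv⟩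
  have hact_meas : Measurable fun p :
      (EuclideanSpace ℝ (Fin n)) ×
        unitary ((EuclideanSpace ℝ (Fin n)) →L[ℝ] (EuclideanSpace ℝ (Fin n))) =>
      uact p.2 p.1 := uact_meas2
  have hact_meas' : ∀ x, Measurable fun O :
      unitary ((EuclideanSpace ℝ (Fin n)) →L[ℝ] (EuclideanSpace ℝ (Fin n))) =>
      uact O x := fun x => uact_meas1 x
  -- change of variables for μ
  have hchg : ∀ (O : unitary ((EuclideanSpace ℝ (Fin n)) →L[ℝ] (EuclideanSpace ℝ (Fin n))))
      (f : EuclideanSpace ℝ (Fin n) → ENNReal), Measurable f →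
      ∫⁻ x, f (uact O x) ∂μ = ∫⁻ x, f x ∂μ := by
    intro O f hf
    have h := lintegral_map hf (uact_measO O) (μ := μ)
    rw [hinv (uact O)] at h
    exact h.symm
  set B : Set (EuclideanSpace ℝ (Fin n)) := Metric.closedBall 0 R with hB
  set b : EuclideanSpace ℝ (Fin n) → ENNReal := B.indicator 1 with hb
  have hBmeas : MeasurableSet B := measurableSet_closedBall
  have hbmeas : Measurable b := measurable_const.indicator hBmeas
  have hindmeas : Measurable (T.indicator (1 : EuclideanSpace ℝ (Fin n) → ENNReal)) :=
    measurable_const.indicator hTmeas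
  set g : EuclideanSpace ℝ (Fin n) → ENNReal :=
    fun x => ∫⁻ O, T.indicator 1 (uact O x) ∂P with hg
  have hgmeas : Measurable g := by
    apply Measurable.lintegral_prod_right (f := fun x O => T.indicator 1 (uact O x))
    exact hindmeas.comp hact_meas
  -- g as measure of a set
  have hg_set : ∀ x, g x = P ((fun O => uact O x) ⁻¹' T) := by
    intro x
    have h1 : ∀ O, T.indicator (1 : EuclideanSpace ℝ (Fin n) → ENNReal) (uact O x)
        = ((fun O => uact O x) ⁻¹' T).indicator 1 O := by
      intro O
      by_cases h : uact O x ∈ T <;>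
        simp [Set.indicator_of_mem, Set.indicator_of_notMem, h, Set.mem_preimage]
    rw [hg]
    simp only [h1]
    rw [lintegral_indicator_one ((hact_meas' x) hTmeas)]
  -- integral of g
  have hgint : ∫⁻ x, g x ∂μ = μ T := by
    have ham : AEMeasurable (Function.uncurry fun (x : EuclideanSpace ℝ (Fin n)) O =>
        T.indicator 1 (uact O x)) (μ.prod P) := (hindmeas.comp hact_meas).aemeasurable
    rw [hg, lintegral_lintegral_swap ham]
    have h : ∀ O, ∫⁻ x, T.indicator 1 (uact O x) ∂μ = μ T := by
      intro O
      rw [hchg O _ hindmeas, lintegral_indicator_one hTmeas]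
    simp only [h]
    rw [lintegral_const, hPuniv, mul_one]
  -- integral of b * g
  have hbgint : ∫⁻ x, b x * g x ∂μ = μ (B ∩ T) := by
    have h1 : ∀ x, b x * g x = ∫⁻ O, (B ∩ T).indicator 1 (uact O x) ∂P := by
      intro x
      have hgx : g x = ∫⁻ O, T.indicator 1 (uact O x) ∂P := rfl
      have hm1 : Measurable fun O => T.indicator (1 : EuclideanSpace ℝ (Fin n) → ENNReal)
          (uact O x) := hindmeas.comp (hact_meas' x)
      rw [hgx, ← lintegral_const_mul _ hm1]
      congr 1
      funext O
      have hbx : b x = B.indicator (1 : EuclideanSpace ℝ (Fin n) → ENNReal) (uact O x) := by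
        by_cases h : x ∈ B
        · have h2 : uact O x ∈ B := by
            simp only [hB, Metric.mem_closedBall, dist_zero_right] at h ⊢
            rw [uact_norm]; exact h
          simp [hb, Set.indicator_of_mem, h, h2]
        · have h2 : uact O x ∉ B := by
            simp only [hB, Metric.mem_closedBall, dist_zero_right] at h ⊢
            rw [uact_norm]; exact h
          simp [hb, Set.indicator_of_notMem, h, h2]
      rw [hbx]
      by_cases h1m : uact O x ∈ B <;> by_cases h2m : uact O x ∈ T <;>
        simp [Set.indicator_of_mem, Set.indicator_of_notMem, h1m, h2m, Set.mem_inter_iff]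
    simp only [h1]
    have hBTind : Measurable ((B ∩ T).indicator (1 : EuclideanSpace ℝ (Fin n) → ENNReal)) :=
      measurable_const.indicator (hBmeas.inter hTmeas)
    have ham2 : AEMeasurable (Function.uncurry fun (x : EuclideanSpace ℝ (Fin n)) O =>
        (B ∩ T).indicator 1 (uact O x)) (μ.prod P) := (hBTind.comp hact_meas).aemeasurable
    rw [lintegral_lintegral_swap ham2]
    have h : ∀ O, ∫⁻ x, (B ∩ T).indicator 1 (uact O x) ∂μ = μ (B ∩ T) := by
      intro O
      rw [hchg O _ hBTind, lintegral_indicator_one (hBmeas.inter hTmeas)]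
    simp only [h]
    rw [lintegral_const, hPuniv, mul_one]
  have hbint : ∫⁻ x, b x ∂μ = μ B := lintegral_indicator_one hBmeas
  -- monotonicity of g
  have hgmono : ∀ x y : EuclideanSpace ℝ (Fin n), ‖x‖ ≤ ‖y‖ → g y ≤ g x := by
    intro x y hxy
    by_cases hy : y = 0
    · have hx : x = 0 := by
        rw [hy, norm_zero] at hxy
        exact norm_eq_zero.1 (le_antisymm hxy (norm_nonneg x))
      rw [hx, hy]
    · have hyn : 0 < ‖y‖ := norm_pos_iff.2 hy
      have ht0 : 0 ≤ ‖x‖ / ‖y‖ := div_nonneg (norm_nonneg x) (norm_nonneg y)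
      have ht1 : ‖x‖ / ‖y‖ ≤ 1 := (div_le_one hyn).2 hxy
      have hzx : ‖x‖ = ‖(‖x‖ / ‖y‖) • y‖ := by
        rw [norm_smul, Real.norm_of_nonneg ht0, div_mul_cancel₀]
        exact hyn.ne'
      obtain ⟨U, hU⟩ := uact_exists x ((‖x‖ / ‖y‖) • y) hzx
      have hkey : ∀ O, uact O y ∈ T → uact (U * O) x ∈ T := by
        intro O hO
        rw [uact_mul, hU, _root_.map_smul]
        exact hstar _ hO _ ht0 ht1
      rw [hg_set, hg_set]
      have hsub : ((fun O => uact O y) ⁻¹' T)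
          ⊆ (fun O => U * O) ⁻¹' ((fun O => uact O x) ⁻¹' T) :=
        fun O hO => hkey O hO
      calc P ((fun O => uact O y) ⁻¹' T)
          ≤ P ((fun O => U * O) ⁻¹' ((fun O => uact O x) ⁻¹' T)) := measure_mono hsub
        _ = P ((fun O => uact O x) ⁻¹' T) := measure_preimage_mul P U _
  -- b is monotone
  have hbmono : ∀ x y : EuclideanSpace ℝ (Fin n), ‖x‖ ≤ ‖y‖ → b y ≤ b x := by
    intro x y hxy
    by_cases h : y ∈ B
    · have hx : x ∈ B := by
        simp only [hB, Metric.mem_closedBall, dist_zero_right] at h ⊢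
        exact hxy.trans h
      simp [hb, Set.indicator_of_mem, h, hx]
    · simp [hb, Set.indicator_of_notMem, h]
  -- Chebyshev pointwise
  have cheb : ∀ a a' c c' : ENNReal, a' ≤ a → c' ≤ c →
      a * c' + a' * c ≤ a * c + a' * c' := by
    intro a a' c c' ha hc
    calc a * c' + a' * c = a * c' + (a' * c' + a' * (c - c')) := by
          rw [← mul_add, add_tsub_cancel_of_le hc]
      _ ≤ a * c' + (a' * c' + a * (c - c')) := by gcongr
      _ = (a * c' + a * (c - c')) + a' * c' := by ring
      _ = a * c + a' * c' := by rw [← mul_add, add_tsub_cancel_of_le hc]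
  have key : ∀ x y, b x * g y + b y * g x ≤ b x * g x + b y * g y := by
    intro x y
    rcases le_total ‖x‖ ‖y‖ with h | h
    · exact cheb _ _ _ _ (hbmono x y h) (hgmono x y h)
    · rw [add_comm (b x * g y), add_comm (b x * g x)]
      exact cheb _ _ _ _ (hbmono y x h) (hgmono y x h)
  have step1 : ∀ y, μ B * g y + b y * μ T ≤ μ (B ∩ T) + b y * g y * μ Set.univ := by
    intro y
    have h1 : ∫⁻ x, (b x * g y + b y * g x) ∂μ = μ B * g y + b y * μ T := by
      rw [lintegral_add_left (hbmeas.mul_const _),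
        lintegral_mul_const _ hbmeas, lintegral_const_mul _ hgmeas, hbint, hgint]
    have h2 : ∫⁻ x, (b x * g x + b y * g y) ∂μ = μ (B ∩ T) + b y * g y * μ Set.univ := by
      rw [lintegral_add_left (f := fun x => b x * g x) (hbmeas.mul hgmeas), hbgint, lintegral_const]
    calc μ B * g y + b y * μ T = ∫⁻ x, (b x * g y + b y * g x) ∂μ := h1.symm
      _ ≤ ∫⁻ x, (b x * g x + b y * g y) ∂μ := lintegral_mono fun x => key x y
      _ = μ (B ∩ T) + b y * g y * μ Set.univ := h2
  have step2 : μ B * μ T + μ B * μ T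
      ≤ μ (B ∩ T) * μ Set.univ + μ (B ∩ T) * μ Set.univ := by
    have h1 : ∫⁻ y, (μ B * g y + b y * μ T) ∂μ = μ B * μ T + μ B * μ T := by
      rw [lintegral_add_left (f := fun y => μ B * g y) (measurable_const.mul hgmeas),
        lintegral_const_mul _ hgmeas, lintegral_mul_const _ hbmeas, hgint, hbint]
    have h2 : ∫⁻ y, (μ (B ∩ T) + b y * g y * μ Set.univ) ∂μ
        = μ (B ∩ T) * μ Set.univ + μ (B ∩ T) * μ Set.univ := by
      rw [lintegral_add_left measurable_const, lintegral_const,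
        lintegral_mul_const (f := fun y => b y * g y) _ (hbmeas.mul hgmeas), hbgint]
    calc μ B * μ T + μ B * μ T = ∫⁻ y, (μ B * g y + b y * μ T) ∂μ := h1.symm
      _ ≤ ∫⁻ y, (μ (B ∩ T) + b y * g y * μ Set.univ) ∂μ := lintegral_mono step1
      _ = μ (B ∩ T) * μ Set.univ + μ (B ∩ T) * μ Set.univ := h2
  have h2 : (2 : ENNReal) * (μ B * μ T) ≤ 2 * (μ (B ∩ T) * μ Set.univ) := by
    rw [two_mul, two_mul]; exact step2
  exact (ENNReal.mul_le_mul_iff_right (by norm_num) (by norm_num)).mp h2
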